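/- There exists a constant C > 0 such that for every integer n ≥ 2 and every a ∈ ℝⁿ with ‖a‖ < 1/8, the functions t_a and π_a are differentiable at every point x of the open unit ball of ℝⁿ with x ≠ a, with ‖∇t_a(x)‖ ≤ C·‖a‖/‖x−a‖ and with the operator norm of the Fréchet derivative of π_a at x bounded by C/‖x−a‖. -/

import Mathlib

open scoped RealInnerProductSpace

/-- Operator norm of a real scalar multiple of a continuous linear map. -/
lemma opnorm_smul_le' {E F : Type*} [NormedAddCommGroup E] [NormedSpace ℝ E]
    [NormedAddCommGroup F] [NormedSpace ℝ F] (c : ℝ) (L : E →L[ℝ] F) :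
    ‖c • L‖ ≤ |c| * ‖L‖ := by
  rw [← Real.norm_eq_abs]
  exact ContinuousLinearMap.opNorm_smul_le c L

/-- The scalar factor `t_a(x)` of the radial projection from `a` onto the unit sphere. -/
noncomputable def tproj {n : ℕ} (a x : EuclideanSpace ℝ (Fin n)) : ℝ :=
  -(⟪a, x - a⟫ / ‖x - a‖) + Real.sqrt ((⟪a, x - a⟫ / ‖x - a‖) ^ 2 + 1 - ‖a‖ ^ 2)

/-- The radial projection `π_a(x) = a + t_a(x)·(x−a)/‖x−a‖` from `a` onto the unit sphere. -/
noncomputable def piProj {n : ℕ} (a x : EuclideanSpace ℝ (Fin n)) :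
    EuclideanSpace ℝ (Fin n) :=
  a + (tproj a x / ‖x - a‖) • (x - a)

set_option maxHeartbeats 2000000 in
set_option synthInstance.maxHeartbeats 400000 in
/-- Gradient estimates (est:t_a) and (est:pi_a) from the proof of Proposition 3.2
(prop:approx): there is a universal constant `C > 0` such that for every `n ≥ 2`,
every `a` with `‖a‖ < 1/8`, and every `x` in the open unit ball with `x ≠ a`, the maps
`t_a` and `π_a` are differentiable at `x` with `‖∇t_a(x)‖ ≤ C‖a‖/‖x−a‖` and the operator
norm of the derivative of `π_a` at `x` bounded by `C/‖x−a‖`. -/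
theorem stmt_13 :
    ∃ C : ℝ, 0 < C ∧ ∀ n : ℕ, 2 ≤ n → ∀ a x : EuclideanSpace ℝ (Fin n),
      ‖a‖ < 1 / 8 → ‖x‖ < 1 → x ≠ a →
        ∃ (Dt : EuclideanSpace ℝ (Fin n) →L[ℝ] ℝ)
          (Dπ : EuclideanSpace ℝ (Fin n) →L[ℝ] EuclideanSpace ℝ (Fin n)),
          HasFDerivAt (tproj a) Dt x ∧ HasFDerivAt (piProj a) Dπ x ∧
          ‖Dt‖ ≤ C * ‖a‖ / ‖x - a‖ ∧ ‖Dπ‖ ≤ C / ‖x - a‖ := by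
  refine ⟨7, by norm_num, ?_⟩
  intro n hn a x ha hx hxa
  have hu0 : x - a ≠ 0 := sub_ne_zero.mpr hxa
  have hr : (0:ℝ) < ‖x - a‖ := norm_pos_iff.mpr hu0
  have ha0 : (0:ℝ) ≤ ‖a‖ := norm_nonneg a
  -- derivative of the inner product term
  have hF : HasFDerivAt (fun y : EuclideanSpace ℝ (Fin n) => ⟪a, y - a⟫)
      (innerSL ℝ a) x := by
    exact ((innerSL ℝ a).hasFDerivAt.comp x ((hasFDerivAt_id x).sub_const a))
  -- derivative of the norm
  have lip : LipschitzWith 1 (fun y : EuclideanSpace ℝ (Fin n) => ‖y - a‖) := by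
    apply LipschitzWith.of_dist_le_mul
    intro y z
    rw [Real.dist_eq, NNReal.coe_one, one_mul, dist_eq_norm]
    calc |‖y - a‖ - ‖z - a‖| ≤ ‖(y - a) - (z - a)‖ := abs_norm_sub_norm_le _ _
      _ = ‖y - z‖ := by rw [sub_sub_sub_cancel_right]
  have hdn : DifferentiableAt ℝ (fun y : EuclideanSpace ℝ (Fin n) => ‖y - a‖) x :=
    (differentiableAt_id.sub_const a).norm ℝ hu0
  set N := fderiv ℝ (fun y : EuclideanSpace ℝ (Fin n) => ‖y - a‖) x with hNdef
  have hN : HasFDerivAt (fun y : EuclideanSpace ℝ (Fin n) => ‖y - a‖) N x := hdn.hasFDerivAt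
  have hNle : ‖N‖ ≤ 1 := by simpa using hN.le_of_lipschitz lip
  have hInv : HasFDerivAt (fun y : EuclideanSpace ℝ (Fin n) => (‖y - a‖)⁻¹)
      ((-(‖x - a‖ ^ 2)⁻¹) • N) x := by
    exact (hasDerivAt_inv hr.ne').comp_hasFDerivAt x hN
  have hS := hF.mul hInv
  have hG := (((hS.mul hS).add_const 1).sub_const (‖a‖ ^ 2))
  -- pointwise bounds
  have hip : |⟪a, x - a⟫| ≤ ‖a‖ * ‖x - a‖ := abs_real_inner_le_norm a (x - a)
  have hsx : |⟪a, x - a⟫ * ‖x - a‖⁻¹| ≤ ‖a‖ := by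
    rw [abs_mul, abs_inv, abs_norm]
    calc |⟪a, x - a⟫| * ‖x - a‖⁻¹ ≤ (‖a‖ * ‖x - a‖) * ‖x - a‖⁻¹ := by gcongr
      _ = ‖a‖ := by field_simp
  have habs := abs_le.mp hsx
  have hg14 : (1:ℝ)/4 ≤ ⟪a, x - a⟫ * ‖x - a‖⁻¹ * (⟪a, x - a⟫ * ‖x - a‖⁻¹) + 1 - ‖a‖ ^ 2 := by
    nlinarith [sq_nonneg (⟪a, x - a⟫ * ‖x - a‖⁻¹)]
  have hg0 : (0:ℝ) < ⟪a, x - a⟫ * ‖x - a‖⁻¹ * (⟪a, x - a⟫ * ‖x - a‖⁻¹) + 1 - ‖a‖ ^ 2 := by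
    linarith
  have hg4 : ⟪a, x - a⟫ * ‖x - a‖⁻¹ * (⟪a, x - a⟫ * ‖x - a‖⁻¹) + 1 - ‖a‖ ^ 2 ≤ 4 := by
    nlinarith [sq_nonneg ‖a‖]
  set gx := ⟪a, x - a⟫ * ‖x - a‖⁻¹ * (⟪a, x - a⟫ * ‖x - a‖⁻¹) + 1 - ‖a‖ ^ 2 with hgxdef
  have hsqrt_lo : (1:ℝ)/2 ≤ Real.sqrt gx := by
    have h1 : Real.sqrt (1/4) = 1/2 := by
      rw [show (1:ℝ)/4 = (1/2)^2 by norm_num, Real.sqrt_sq (by norm_num)]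
    rw [← h1]; exact Real.sqrt_le_sqrt hg14
  have hsqrt_hi : Real.sqrt gx ≤ 2 := by
    have h1 : Real.sqrt 4 = 2 := by
      rw [show (4:ℝ) = 2^2 by norm_num, Real.sqrt_sq (by norm_num)]
    rw [← h1]; exact Real.sqrt_le_sqrt hg4
  have hSq := (Real.hasDerivAt_sqrt hg0.ne').comp_hasFDerivAt x hG
  have hT := hS.neg.add hSq
  -- identify the function with `tproj a`
  have hfun : (tproj a : EuclideanSpace ℝ (Fin n) → ℝ) = fun y =>
      -(⟪a, y - a⟫ * ‖y - a‖⁻¹) +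
        ((fun z => Real.sqrt z) ∘ fun y =>
          ⟪a, y - a⟫ * ‖y - a‖⁻¹ * (⟪a, y - a⟫ * ‖y - a‖⁻¹) + 1 - ‖a‖ ^ 2) y := by
    funext y
    simp [tproj, div_eq_mul_inv, Function.comp, pow_two]
  replace hT : HasFDerivAt (tproj a)
      (-(⟪a, x - a⟫ • (-(‖x - a‖ ^ 2)⁻¹ • N) + ‖x - a‖⁻¹ • (innerSL ℝ a)) +
        (1 / (2 * Real.sqrt gx)) •
          ((⟪a, x - a⟫ * ‖x - a‖⁻¹) • (⟪a, x - a⟫ • (-(‖x - a‖ ^ 2)⁻¹ • N) + ‖x - a‖⁻¹ • (innerSL ℝ a)) +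
            (⟪a, x - a⟫ * ‖x - a‖⁻¹) • (⟪a, x - a⟫ • (-(‖x - a‖ ^ 2)⁻¹ • N) + ‖x - a‖⁻¹ • (innerSL ℝ a)))) x := by
    rw [hfun]; exact hT
  -- bound the derivative of the scalar factor
  set Ds := ⟪a, x - a⟫ • (-(‖x - a‖ ^ 2)⁻¹ • N) + ‖x - a‖⁻¹ • (innerSL ℝ a) with hDsdef
  have hterm1 : ‖⟪a, x - a⟫ • (-(‖x - a‖ ^ 2)⁻¹ • N)‖ ≤ (‖a‖ * ‖x - a‖) * ((‖x - a‖ ^ 2)⁻¹ * 1) := by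
    refine (opnorm_smul_le' _ _).trans ?_
    have h2 : ‖(-(‖x - a‖ ^ 2)⁻¹ : ℝ) • N‖ ≤ (‖x - a‖ ^ 2)⁻¹ * 1 := by
      refine (opnorm_smul_le' _ _).trans ?_
      rw [abs_neg, abs_inv, abs_pow, abs_norm]
      gcongr
    exact mul_le_mul hip h2 (norm_nonneg _) (by positivity)
  have hterm2 : ‖(‖x - a‖⁻¹ : ℝ) • (innerSL ℝ a)‖ ≤ ‖x - a‖⁻¹ * ‖a‖ := by
    refine (opnorm_smul_le' _ _).trans ?_
    rw [abs_inv, abs_norm, innerSL_apply_norm]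
  have hDs_le : ‖Ds‖ ≤ 2 * ‖a‖ / ‖x - a‖ := by
    rw [hDsdef]
    refine (norm_add_le _ _).trans ?_
    refine (add_le_add hterm1 hterm2).trans_eq ?_
    field_simp
    ring
  set Dt := -Ds + (1 / (2 * Real.sqrt gx)) •
      ((⟪a, x - a⟫ * ‖x - a‖⁻¹) • Ds + (⟪a, x - a⟫ * ‖x - a‖⁻¹) • Ds) with hDtdef
  have hDt_le : ‖Dt‖ ≤ 4 * ‖a‖ / ‖x - a‖ := by
    have h2 : |1 / (2 * Real.sqrt gx)| ≤ 1 := by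
      rw [abs_div, abs_of_pos (by linarith : (0:ℝ) < 2 * Real.sqrt gx)]
      rw [div_le_one (by linarith)]
      simp; linarith
    have h3 : ‖(⟪a, x - a⟫ * ‖x - a‖⁻¹) • Ds + (⟪a, x - a⟫ * ‖x - a‖⁻¹) • Ds‖
        ≤ ‖a‖ * ‖Ds‖ + ‖a‖ * ‖Ds‖ := by
      refine (norm_add_le _ _).trans ?_
      have := (opnorm_smul_le' (⟪a, x - a⟫ * ‖x - a‖⁻¹) Ds).trans
        (mul_le_mul_of_nonneg_right hsx (norm_nonneg Ds))
      exact add_le_add this this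
    calc ‖Dt‖ ≤ ‖-Ds‖ + ‖(1 / (2 * Real.sqrt gx)) •
          ((⟪a, x - a⟫ * ‖x - a‖⁻¹) • Ds + (⟪a, x - a⟫ * ‖x - a‖⁻¹) • Ds)‖ := by
          rw [hDtdef]; exact norm_add_le _ _
      _ ≤ ‖Ds‖ + 1 * (‖a‖ * ‖Ds‖ + ‖a‖ * ‖Ds‖) := by
          rw [norm_neg]
          refine add_le_add le_rfl ?_
          refine (opnorm_smul_le' _ _).trans ?_
          exact mul_le_mul h2 h3 (norm_nonneg _) (by norm_num)
      _ ≤ ‖Ds‖ + ‖Ds‖ := by nlinarith [norm_nonneg Ds]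
      _ ≤ 2 * ‖a‖ / ‖x - a‖ + 2 * ‖a‖ / ‖x - a‖ := by exact add_le_add hDs_le hDs_le
      _ = 4 * ‖a‖ / ‖x - a‖ := by ring
  -- bounds on tproj a x
  have htx : tproj a x = -(⟪a, x - a⟫ * ‖x - a‖⁻¹) + Real.sqrt gx := by
    rw [hfun]
    simp only [Function.comp_apply]
    rfl
  have htx_pos : 0 < tproj a x := by
    rw [htx]; have := habs.2; linarith
  have htx_le : tproj a x ≤ 3 := by
    rw [htx]; have := habs.1; linarith
  -- derivative of piProj
  have hQ := hT.mul hInv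
  have hPre := (hQ.smul ((hasFDerivAt_id x).sub_const a)).const_add a
  have hPre' : HasFDerivAt (piProj a)
      ((tproj a x * ‖x - a‖⁻¹) • ContinuousLinearMap.id ℝ (EuclideanSpace ℝ (Fin n)) +
        (tproj a x • (-(‖x - a‖ ^ 2)⁻¹ • N) + ‖x - a‖⁻¹ • Dt).smulRight (x - a)) x := by
    refine HasFDerivAt.congr_of_eventuallyEq hPre ?_
    exact Filter.Eventually.of_forall fun y => by simp only [piProj, div_eq_mul_inv, id_eq, Pi.smul_apply', Pi.mul_apply]
  -- bound the derivative of piProj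
  set Dq := tproj a x • (-(‖x - a‖ ^ 2)⁻¹ • N) + ‖x - a‖⁻¹ • Dt with hDqdef
  have hDq_le : ‖Dq‖ ≤ tproj a x * (‖x - a‖ ^ 2)⁻¹ + ‖x - a‖⁻¹ * (4 * ‖a‖ / ‖x - a‖) := by
    rw [hDqdef]
    refine (norm_add_le _ _).trans (add_le_add ?_ ?_)
    · refine (opnorm_smul_le' _ _).trans ?_
      rw [abs_of_pos htx_pos]
      have h2 : ‖(-(‖x - a‖ ^ 2)⁻¹ : ℝ) • N‖ ≤ (‖x - a‖ ^ 2)⁻¹ := by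
        refine (opnorm_smul_le' _ _).trans ?_
        rw [abs_neg, abs_inv, abs_pow, abs_norm]
        calc (‖x - a‖ ^ 2)⁻¹ * ‖N‖ ≤ (‖x - a‖ ^ 2)⁻¹ * 1 := by gcongr
          _ = (‖x - a‖ ^ 2)⁻¹ := mul_one _
      exact mul_le_mul_of_nonneg_left h2 htx_pos.le
    · refine (opnorm_smul_le' _ _).trans ?_
      rw [abs_inv, abs_norm]
      exact mul_le_mul_of_nonneg_left hDt_le (by positivity)
  have hDπ_le : ‖(tproj a x * ‖x - a‖⁻¹) • ContinuousLinearMap.id ℝ (EuclideanSpace ℝ (Fin n)) +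
      Dq.smulRight (x - a)‖ ≤ 7 / ‖x - a‖ := by
    refine (norm_add_le _ _).trans ?_
    have h1 : ‖(tproj a x * ‖x - a‖⁻¹) •
        ContinuousLinearMap.id ℝ (EuclideanSpace ℝ (Fin n))‖ ≤ tproj a x * ‖x - a‖⁻¹ := by
      refine (opnorm_smul_le' _ _).trans ?_
      rw [abs_of_pos (by positivity)]
      calc tproj a x * ‖x - a‖⁻¹ * ‖ContinuousLinearMap.id ℝ (EuclideanSpace ℝ (Fin n))‖
          ≤ tproj a x * ‖x - a‖⁻¹ * 1 := by
            gcongr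
            exact ContinuousLinearMap.norm_id_le
        _ = tproj a x * ‖x - a‖⁻¹ := mul_one _
    have h2 : ‖Dq.smulRight (x - a)‖ ≤
        (tproj a x * (‖x - a‖ ^ 2)⁻¹ + ‖x - a‖⁻¹ * (4 * ‖a‖ / ‖x - a‖)) * ‖x - a‖ := by
      rw [ContinuousLinearMap.norm_smulRight_apply]
      exact mul_le_mul_of_nonneg_right hDq_le (norm_nonneg _)
    refine (add_le_add h1 h2).trans ?_
    have key : tproj a x * ‖x - a‖⁻¹ +
        (tproj a x * (‖x - a‖ ^ 2)⁻¹ + ‖x - a‖⁻¹ * (4 * ‖a‖ / ‖x - a‖)) * ‖x - a‖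
        = (2 * tproj a x + 4 * ‖a‖) / ‖x - a‖ := by
      field_simp
      ring
    rw [key]
    gcongr
    linarith
  refine ⟨Dt, _, hT, hPre', ?_, hDπ_le⟩
  refine hDt_le.trans ?_
  gcongr
  norm_num
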